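/- Let K ⊂ ℝⁿ be a nonempty compact subset and ε > 0. Then the boundary of the closed ε-neighborhood N_ε(K) = {x : dist(x,K) ≤ ε} has Lebesgue measure zero. -/

import Mathlib

open Metric MeasureTheory Set Filter
open scoped ENNReal NNReal Topology

/-- The boundary of the closed `ε`-neighborhood of a nonempty compact set
`K ⊆ ℝⁿ` has Lebesgue measure zero. -/
theorem stmt_1 {n : ℕ} (K : Set (EuclideanSpace ℝ (Fin n))) (hK : IsCompact K)
    (hne : K.Nonempty) (ε : ℝ) (hε : 0 < ε) :
    MeasureTheory.volume (frontier (Metric.cthickening ε K)) = 0 := by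
  set S : Set (EuclideanSpace ℝ (Fin n)) := {x | Metric.infDist x K = ε} with hS
  have hSclosed : IsClosed S :=
    isClosed_eq (Metric.continuous_infDist_pt K) continuous_const
  have hsub : frontier (Metric.cthickening ε K) ⊆ S := by
    intro x hx
    have h1 : Metric.infEDist x K = ENNReal.ofReal ε :=
      Metric.frontier_cthickening_subset K hx
    show Metric.infDist x K = ε
    rw [Metric.infDist, h1, ENNReal.toReal_ofReal hε.le]
  refine measure_mono_null hsub ?_
  -- constants
  set m := Module.finrank ℝ (EuclideanSpace ℝ (Fin n)) with hm
  set c : ℝ≥0∞ := ENNReal.ofReal ((4 : ℝ)⁻¹ ^ m) with hc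
  have hc0 : c ≠ 0 := by
    rw [hc, ne_eq, ENNReal.ofReal_eq_zero, not_le]
    positivity
  have hc1 : c ≤ 1 := by
    rw [hc, ← ENNReal.ofReal_one]
    apply ENNReal.ofReal_le_ofReal
    apply pow_le_one₀ (by norm_num) (by norm_num)
  -- key pointwise bound
  have key : ∀ x ∈ S, ∀ r : ℝ, 0 < r → r < ε →
      volume (S ∩ closedBall x r) / volume (closedBall x r) ≤ 1 - c := by
    intro x hxS r hr hrε
    obtain ⟨y, hyK, hxy⟩ := hK.exists_infDist_eq_dist hne x
    have hdxy : dist x y = ε := by rw [← hxy]; exact hxS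
    set w : EuclideanSpace ℝ (Fin n) := x + (r / (2 * ε)) • (y - x) with hw
    have ht0 : 0 < r / (2 * ε) := by positivity
    have ht1 : r / (2 * ε) ≤ 1 := by
      rw [div_le_one (by positivity)]; linarith
    have hwx : dist w x = r / 2 := by
      rw [dist_eq_norm]
      have : w - x = (r / (2 * ε)) • (y - x) := by rw [hw, add_sub_cancel_left]
      rw [this, norm_smul, Real.norm_eq_abs, abs_of_pos ht0]
      have hyx : ‖y - x‖ = ε := by rw [← hdxy, dist_eq_norm, norm_sub_rev]
      rw [hyx]
      field_simp
    have hwy : dist w y = ε - r / 2 := by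
      rw [dist_eq_norm]
      have : w - y = (1 - r / (2 * ε)) • (x - y) := by rw [hw]; module
      rw [this, norm_smul, Real.norm_eq_abs, abs_of_nonneg (by linarith)]
      have hxyn : ‖x - y‖ = ε := by rw [← hdxy, dist_eq_norm]
      rw [hxyn]
      field_simp
    have hBsub : closedBall w (r / 4) ⊆ closedBall x r := by
      intro z hz
      simp only [mem_closedBall] at hz ⊢
      calc dist z x ≤ dist z w + dist w x := dist_triangle z w x
        _ ≤ r / 4 + r / 2 := by rw [hwx] at *; linarith [hz]
        _ ≤ r := by linarith
    have hBdisj : Disjoint S (closedBall w (r / 4)) := by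
      rw [Set.disjoint_left]
      intro z hzS hz
      simp only [mem_closedBall] at hz
      have : Metric.infDist z K ≤ dist z y := Metric.infDist_le_dist_of_mem hyK
      have h2 : dist z y ≤ dist z w + dist w y := dist_triangle z w y
      have hzval : Metric.infDist z K = ε := hzS
      rw [hwy] at h2
      nlinarith [hzval ▸ this]
    -- measure computation
    have hrm : (0:ℝ) ≤ r := hr.le
    have hBw : volume (closedBall w (r / 4)) = c * volume (closedBall x r) := by
      rw [Measure.addHaar_closedBall' volume w (by positivity),
        Measure.addHaar_closedBall' volume x hrm, hc, ← mul_assoc,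
        ← ENNReal.ofReal_mul (by positivity)]
      congr 2
      rw [div_pow, ← hm]
      rw [inv_pow]
      ring
    have hBfin : volume (closedBall x r) ≠ ∞ := measure_closedBall_lt_top.ne
    have hB0 : volume (closedBall x r) ≠ 0 :=
      (measure_closedBall_pos volume x hr).ne'
    rw [ENNReal.div_le_iff hB0 hBfin]
    have hle : volume (S ∩ closedBall x r) ≤
        volume (closedBall x r) - volume (closedBall w (r / 4)) := by
      have hsub2 : S ∩ closedBall x r ⊆ closedBall x r \ closedBall w (r / 4) := by
        intro z ⟨hz1, hz2⟩
        exact ⟨hz2, fun hzc => Set.disjoint_left.mp hBdisj hz1 hzc⟩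
      calc volume (S ∩ closedBall x r) ≤ volume (closedBall x r \ closedBall w (r / 4)) :=
            measure_mono hsub2
        _ = volume (closedBall x r) - volume (closedBall w (r / 4)) :=
            measure_diff hBsub measurableSet_closedBall.nullMeasurableSet
              (measure_closedBall_lt_top.ne)
    refine hle.trans ?_
    rw [hBw]
    rw [ENNReal.sub_mul (fun _ _ => hBfin), one_mul]
  -- density theorem
  have hdensity := Besicovitch.ae_tendsto_measure_inter_div_of_measurableSet
    (volume : Measure (EuclideanSpace ℝ (Fin n))) hSclosed.measurableSet
  rw [MeasureTheory.ae_iff] at hdensity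
  refine measure_mono_null (fun x hxS => ?_) hdensity
  simp only [Set.mem_setOf_eq]
  intro htend
  have hind : S.indicator (1 : EuclideanSpace ℝ (Fin n) → ℝ≥0∞) x = 1 := by
    rw [Set.indicator_of_mem hxS]; rfl
  rw [hind] at htend
  have h1c : (1 : ℝ≥0∞) - c < 1 :=
    ENNReal.sub_lt_self ENNReal.one_ne_top one_ne_zero hc0
  have hev1 : ∀ᶠ r in nhdsWithin 0 (Set.Ioi 0),
      1 - c < volume (S ∩ closedBall x r) / volume (closedBall x r) :=
    htend.eventually (lt_mem_nhds h1c)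
  have hev2 : ∀ᶠ r in nhdsWithin 0 (Set.Ioi 0), r ∈ Set.Ioo (0:ℝ) ε :=
    Ioo_mem_nhdsGT_of_mem ⟨le_refl 0, hε⟩
  obtain ⟨r, h1, h2⟩ := (hev1.and hev2).exists
  exact absurd (key x hxS r h2.1 h2.2) (not_le.mpr h1)
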